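/- Let G = (g_{jk}) be a 4×4 matrix with entries in the Gaussian integers Z[i] satisfying Gᴴ J G = J and g₄₁ = 0. Then there exist a unit λ ∈ {1, −1, i, −i} of Z[i], Gaussian integers τ₁, τ₂ with |τ₁|² + |τ₂|² an even integer, an even integer t, and a 2×2 matrix U = (u_{jk}) with Uᴴ U = I and all entries in Z[i], such that λ·G equals the matrix with rows (1, −(τ̄₁u₁₁+τ̄₂u₂₁), −(τ̄₁u₁₂+τ̄₂u₂₂), (−|τ₁|²−|τ₂|²+it)/2), (0, u₁₁, u₁₂, τ₁), (0, u₂₁, u₂₂, τ₂), (0, 0, 0, 1). In other words, up to a unit scalar, every element of the stabilizer of infinity in U(3,1;Z[i]) is a Heisenberg translation composed with a Heisenberg rotation, with integral parameters. -/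

import Mathlib

open Matrix Complex

/-- A complex number is a Gaussian integer. -/
def IsGaussInt (z : ℂ) : Prop := ∃ a b : ℤ, z = (a : ℂ) + (b : ℂ) * Complex.I

noncomputable def Jmat : Matrix (Fin 4) (Fin 4) ℂ :=
  !![0,0,0,1; 0,1,0,0; 0,0,1,0; 1,0,0,0]


lemma IsGaussInt.mul {z w : ℂ} (hz : IsGaussInt z) (hw : IsGaussInt w) : IsGaussInt (z * w) := by
  obtain ⟨a, b, rfl⟩ := hz; obtain ⟨c, d, rfl⟩ := hw
  exact ⟨a*c - b*d, a*d + b*c, by push_cast; linear_combination ((b:ℂ)*d) * Complex.I_sq⟩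

lemma IsGaussInt.conj {z : ℂ} (hz : IsGaussInt z) : IsGaussInt ((starRingEnd ℂ) z) := by
  obtain ⟨a, b, rfl⟩ := hz
  exact ⟨a, -b, by push_cast; simp [Complex.conj_I]⟩

lemma gauss_unit {z w : ℂ} (hz : IsGaussInt z) (hw : IsGaussInt w) (h : w * z = 1) :
    z = 1 ∨ z = -1 ∨ z = Complex.I ∨ z = -Complex.I := by
  obtain ⟨a, b, rfl⟩ := hz; obtain ⟨c, d, rfl⟩ := hw
  have hn := congrArg Complex.normSq h
  simp [Complex.normSq_mul] at hn
  have h1 : Complex.normSq ((a:ℂ) + (b:ℂ)*Complex.I) = (a:ℝ)^2 + (b:ℝ)^2 := by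
    simp [Complex.normSq_apply]; ring
  have h2 : Complex.normSq ((c:ℂ) + (d:ℂ)*Complex.I) = (c:ℝ)^2 + (d:ℝ)^2 := by
    simp [Complex.normSq_apply]; ring
  rw [h1, h2] at hn
  have hi : ((c:ℤ)^2 + d^2) * (a^2 + b^2) = 1 := by exact_mod_cast hn
  have hab : (a:ℤ)^2 + b^2 = 1 := by
    rcases Int.eq_one_or_neg_one_of_mul_eq_one' hi with ⟨_, h⟩ | ⟨_, h⟩
    · exact h
    · nlinarith [sq_nonneg a, sq_nonneg b]
  have ha1 : -1 ≤ a ∧ a ≤ 1 := by constructor <;> nlinarith [sq_nonneg b]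
  have hb1 : -1 ≤ b ∧ b ≤ 1 := by constructor <;> nlinarith [sq_nonneg a]
  obtain ⟨ha, ha'⟩ := ha1; obtain ⟨hb, hb'⟩ := hb1
  interval_cases a <;> interval_cases b <;> simp_all

/-- Up to a unit scalar, every element of the stabilizer of infinity in
`U(3,1; ℤ[i])` is a Heisenberg translation `N_{(τ,t)}` composed with a
Heisenberg rotation `M_U`, with integral parameters. -/
theorem stabilizer_langlands_decomposition
    (G : Matrix (Fin 4) (Fin 4) ℂ)
    (hG : Gᴴ * Jmat * G = Jmat)
    (hint : ∀ j k, IsGaussInt (G j k))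
    (h41 : G 3 0 = 0) :
    ∃ lam : ℂ, (lam = 1 ∨ lam = -1 ∨ lam = Complex.I ∨ lam = -Complex.I) ∧
    ∃ τ₁ τ₂ : ℂ, IsGaussInt τ₁ ∧ IsGaussInt τ₂ ∧
      (∃ m : ℤ, ‖τ₁‖ ^ 2 + ‖τ₂‖ ^ 2 = 2 * m) ∧
    ∃ t : ℤ, Even t ∧
    ∃ U : Matrix (Fin 2) (Fin 2) ℂ, Uᴴ * U = 1 ∧ (∀ j k, IsGaussInt (U j k)) ∧
      lam • G =
        !![1,
           -((starRingEnd ℂ) τ₁ * U 0 0 + (starRingEnd ℂ) τ₂ * U 1 0),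
           -((starRingEnd ℂ) τ₁ * U 0 1 + (starRingEnd ℂ) τ₂ * U 1 1),
           (-(‖τ₁‖ : ℂ) ^ 2 - (‖τ₂‖ : ℂ) ^ 2 +
             Complex.I * (t : ℂ)) / 2;
         0, U 0 0, U 0 1, τ₁;
         0, U 1 0, U 1 1, τ₂;
         0, 0, 0, 1] := by
  have key : ∀ j k : Fin 4,
      (starRingEnd ℂ) (G 0 j) * G 3 k + (starRingEnd ℂ) (G 1 j) * G 1 k
      + (starRingEnd ℂ) (G 2 j) * G 2 k + (starRingEnd ℂ) (G 3 j) * G 0 k = Jmat j k := by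
    intro j k
    have h := congrFun (congrFun hG j) k
    simp [Matrix.mul_apply, Fin.sum_univ_four, Jmat, Matrix.conjTranspose_apply] at h ⊢
    linear_combination h
  have E00 := key 0 0
  rw [h41] at E00
  simp [Jmat, Matrix.vecHead, Matrix.vecTail] at E00
  have hz : Complex.normSq (G 1 0) + Complex.normSq (G 2 0) = 0 := by
    have : ((Complex.normSq (G 1 0) : ℂ) + (Complex.normSq (G 2 0) : ℂ)) = 0 := by
      rw [Complex.normSq_eq_conj_mul_self, Complex.normSq_eq_conj_mul_self]
      linear_combination E00
    exact_mod_cast this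
  have h10 : G 1 0 = 0 := by
    have := Complex.normSq_nonneg (G 1 0); have := Complex.normSq_nonneg (G 2 0)
    exact Complex.normSq_eq_zero.mp (by linarith)
  have h20 : G 2 0 = 0 := by
    have := Complex.normSq_nonneg (G 1 0); have := Complex.normSq_nonneg (G 2 0)
    exact Complex.normSq_eq_zero.mp (by linarith)
  have E30 := key 3 0
  rw [h41, h10, h20] at E30
  simp [Jmat, Matrix.vecHead, Matrix.vecTail] at E30
  -- E30 : conj (G 3 3) * G 0 0 = 1
  have hset := gauss_unit (hint 0 0) ((hint 3 3).conj) E30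
  have hnorm : (starRingEnd ℂ) (G 0 0) * G 0 0 = 1 := by
    rcases hset with h | h | h | h <;> rw [h] <;> simp [Complex.conj_I] <;> ring_nf <;>
      simp [Complex.I_sq]
  have ha0 : G 0 0 ≠ 0 := by
    intro h; rw [h] at hnorm; simp at hnorm
  have h33 : G 3 3 = G 0 0 := by
    have : (starRingEnd ℂ) (G 3 3) = (starRingEnd ℂ) (G 0 0) :=
      mul_right_cancel₀ ha0 (E30.trans hnorm.symm)
    exact (starRingEnd ℂ).injective this
  have E10 := key 1 0
  rw [h41, h10, h20] at E10; simp [Jmat, Matrix.vecHead, Matrix.vecTail] at E10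
  have h31 : G 3 1 = 0 := by
    rcases E10 with h | h
    · exact h
    · exact absurd h ha0
  have E20 := key 2 0
  rw [h41, h10, h20] at E20; simp [Jmat, Matrix.vecHead, Matrix.vecTail] at E20
  have h32 : G 3 2 = 0 := by
    rcases E20 with h | h
    · exact h
    · exact absurd h ha0
  have hlamset : (starRingEnd ℂ) (G 0 0) = 1 ∨ (starRingEnd ℂ) (G 0 0) = -1 ∨
      (starRingEnd ℂ) (G 0 0) = Complex.I ∨ (starRingEnd ℂ) (G 0 0) = -Complex.I := by
    rcases hset with h | h | h | h <;> rw [h] <;> simp [Complex.conj_I]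
  have hlamg : IsGaussInt ((starRingEnd ℂ) (G 0 0)) := (hint 0 0).conj
  -- decompose the corner entry
  obtain ⟨p, q, hb⟩ := hlamg.mul (hint 0 3)
  have hbc : G 0 0 * (starRingEnd ℂ) (G 0 3) = (p : ℂ) - (q : ℂ) * Complex.I := by
    have := congrArg (starRingEnd ℂ) hb
    simpa [Complex.conj_I, sub_eq_add_neg] using this
  -- the E equations we need
  have E11 := key 1 1; rw [h31] at E11; simp [Jmat, Matrix.vecHead, Matrix.vecTail] at E11
  have E12 := key 1 2; rw [h31, h32] at E12; simp [Jmat, Matrix.vecHead, Matrix.vecTail] at E12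
  have E21 := key 2 1; rw [h31, h32] at E21; simp [Jmat, Matrix.vecHead, Matrix.vecTail] at E21
  have E22 := key 2 2; rw [h32] at E22; simp [Jmat, Matrix.vecHead, Matrix.vecTail] at E22
  have E13 := key 1 3; rw [h31, h33] at E13; simp [Jmat, Matrix.vecHead, Matrix.vecTail] at E13
  have E23 := key 2 3; rw [h32, h33] at E23; simp [Jmat, Matrix.vecHead, Matrix.vecTail] at E23
  have E33 := key 3 3; rw [h33] at E33; simp [Jmat, Matrix.vecHead, Matrix.vecTail] at E33
  have E13c := congrArg (starRingEnd ℂ) E13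
  simp only [map_add, _root_.map_mul, map_zero, Complex.conj_conj] at E13c
  have E23c := congrArg (starRingEnd ℂ) E23
  simp only [map_add, _root_.map_mul, map_zero, Complex.conj_conj] at E23c
  -- key quantitative fact: 2p = -(|τ₁|² + |τ₂|²)
  have hp : G 0 0 * (starRingEnd ℂ) (G 1 3) * ((starRingEnd ℂ) (G 0 0) * G 1 3)
      + G 0 0 * (starRingEnd ℂ) (G 2 3) * ((starRingEnd ℂ) (G 0 0) * G 2 3)
      = -2 * (p : ℂ) := by
    linear_combination E33 - hb - hbc +
      ((starRingEnd ℂ) (G 1 3) * G 1 3 + (starRingEnd ℂ) (G 2 3) * G 2 3) * hnorm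
  refine ⟨(starRingEnd ℂ) (G 0 0), hlamset,
    (starRingEnd ℂ) (G 0 0) * G 1 3, (starRingEnd ℂ) (G 0 0) * G 2 3,
    hlamg.mul (hint 1 3), hlamg.mul (hint 2 3), ⟨-p, ?_⟩, 2*q, ⟨q, by ring⟩,
    !![(starRingEnd ℂ) (G 0 0) * G 1 1, (starRingEnd ℂ) (G 0 0) * G 1 2;
       (starRingEnd ℂ) (G 0 0) * G 2 1, (starRingEnd ℂ) (G 0 0) * G 2 2], ?_, ?_, ?_⟩
  · -- evenness
    have : ((‖(starRingEnd ℂ) (G 0 0) * G 1 3‖ ^ 2 : ℝ) : ℂ)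
        + ((‖(starRingEnd ℂ) (G 0 0) * G 2 3‖ ^ 2 : ℝ) : ℂ) = ((2 * (-p : ℤ) : ℤ) : ℂ) := by
      rw [Complex.sq_norm, Complex.sq_norm, Complex.normSq_eq_conj_mul_self,
        Complex.normSq_eq_conj_mul_self]
      push_cast
      simp only [_root_.map_mul, Complex.conj_conj]
      linear_combination hp
    exact_mod_cast this
  · -- U unitary
    ext i j
    fin_cases i <;> fin_cases j <;>
      simp [Matrix.mul_apply, Fin.sum_univ_two, Matrix.conjTranspose_apply, _root_.map_mul,
        Complex.conj_conj, Matrix.one_apply, Matrix.vecHead, Matrix.vecTail]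
    · linear_combination ((starRingEnd ℂ) (G 1 1) * G 1 1 + (starRingEnd ℂ) (G 2 1) * G 2 1) * hnorm + E11
    · linear_combination (G 0 0 * (starRingEnd ℂ) (G 0 0)) * E12
    · linear_combination (G 0 0 * (starRingEnd ℂ) (G 0 0)) * E21
    · linear_combination ((starRingEnd ℂ) (G 1 2) * G 1 2 + (starRingEnd ℂ) (G 2 2) * G 2 2) * hnorm + E22
  · -- U Gaussian
    intro j k
    fin_cases j <;> fin_cases k <;>
      simp only [Matrix.cons_val', Matrix.cons_val_zero, Matrix.cons_val_one, Matrix.head_cons,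
        Matrix.head_fin_const, Matrix.empty_val', Matrix.cons_val_fin_one, Matrix.of_apply] <;>
      exact hlamg.mul (hint _ _)
  · -- the matrix identity
    ext j k
    fin_cases j <;> fin_cases k <;>
      simp [Matrix.smul_apply, smul_eq_mul, _root_.map_mul, Complex.conj_conj, h41, h10, h20,
        h31, h32, h33, hnorm, Matrix.vecHead, Matrix.vecTail]
    · linear_combination E13c + (G 1 1 * (starRingEnd ℂ) (G 1 3) + G 2 1 * (starRingEnd ℂ) (G 2 3)) * hnorm
    · linear_combination E23c + (G 1 2 * (starRingEnd ℂ) (G 1 3) + G 2 2 * (starRingEnd ℂ) (G 2 3)) * hnorm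
    · have habs : ∀ z : ℂ, ((‖z‖ : ℝ) : ℂ) ^ 2 = (starRingEnd ℂ) z * z := fun z => by
        rw [← Complex.ofReal_pow, Complex.sq_norm, Complex.normSq_eq_conj_mul_self]
      simp only [mul_pow, habs]
      push_cast
      linear_combination hb + (1/2 : ℂ) * hp
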